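/- Let m ∈ ℕ, ρ ∈ (0,1], and H_0(u) = m ln(1 + ρu). Then for every θ ∈ (0,1) and every real t, H_0(θ) - Re H_0(θ e^{it}) ≥ (mρ/(1+ρ)²) θ (1 - cos t). -/

import Mathlib

theorem stmt_11 (m : ℕ) (hm : 1 ≤ m) (ρ : ℝ) (hρ : ρ ∈ Set.Ioc (0 : ℝ) 1)
    (θ : ℝ) (hθ : θ ∈ Set.Ioo (0 : ℝ) 1) (t : ℝ) :
    (m : ℝ) * Real.log (1 + ρ * θ) -
        ((m : ℂ) * Complex.log (1 + (ρ : ℂ) * (θ : ℂ) * Complex.exp (Complex.I * t))).re ≥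
      ((m : ℝ) * ρ / (1 + ρ) ^ 2) * θ * (1 - Real.cos t) := by
  obtain ⟨hρ0, hρ1⟩ := hρ
  obtain ⟨hθ0, hθ1⟩ := hθ
  set a := ρ * θ with ha
  have ha0 : 0 < a := mul_pos hρ0 hθ0
  have haρ : a < ρ := by nlinarith
  have ha1 : a < 1 := haρ.trans_le hρ1
  set c := Real.cos t with hc
  have hc1 : c ≤ 1 := Real.cos_le_one t
  have hc1' : -1 ≤ c := Real.neg_one_le_cos t
  set w : ℂ := 1 + (ρ : ℂ) * (θ : ℂ) * Complex.exp (Complex.I * t) with hw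
  have hre : w.re = 1 + a * c := by
    rw [hw, mul_comm Complex.I (t : ℂ)]
    simp [Complex.add_re, Complex.mul_re, Complex.exp_ofReal_mul_I_re,
      Complex.exp_ofReal_mul_I_im, ha, hc]
  have him : w.im = a * Real.sin t := by
    rw [hw, mul_comm Complex.I (t : ℂ)]
    simp [Complex.add_im, Complex.mul_im, Complex.exp_ofReal_mul_I_re,
      Complex.exp_ofReal_mul_I_im, ha]
  set D : ℝ := 1 + 2 * a * c + a ^ 2 with hDdef
  have hnormSq : Complex.normSq w = D := by
    rw [Complex.normSq_apply, hre, him, hDdef]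
    have := Real.sin_sq_add_cos_sq t
    nlinarith [Real.sin_sq_add_cos_sq t]
  have hD : 0 < D := by nlinarith [mul_nonneg ha0.le (by linarith : (0:ℝ) ≤ c + 1)]
  have habs2 : ‖w‖ ^ 2 = D := by rw [Complex.sq_norm, hnormSq]
  have habs0 : 0 < ‖w‖ := by
    rcases (norm_nonneg w).lt_or_eq with h | h
    · exact h
    · exfalso; rw [← habs2, ← h] at hD; simp at hD
  have hlogabs : Real.log ‖w‖ = Real.log D / 2 := by
    rw [← habs2, Real.log_pow]; push_cast; ring
  have hrepart : ((m : ℂ) * Complex.log w).re = (m : ℝ) * (Real.log D / 2) := by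
    rw [Complex.mul_re, Complex.log_re, hlogabs]
    simp
  rw [hrepart]
  -- key real inequality
  set N : ℝ := (1 + a) ^ 2 with hN
  have hN0 : 0 < N := by positivity
  have hlogN : Real.log N = 2 * Real.log (1 + a) := by
    rw [hN, Real.log_pow]; push_cast; ring
  have hkey : Real.log D - Real.log N ≤ D / N - 1 := by
    have h1 : Real.log (D / N) ≤ D / N - 1 := Real.log_le_sub_one_of_pos (by positivity)
    rwa [Real.log_div hD.ne' hN0.ne'] at h1
  have hDN : D / N - 1 = -(2 * a * (1 - c)) / N := by
    field_simp
    ring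
  have hstep : Real.log (1 + a) - Real.log D / 2 ≥ a * (1 - c) / N := by
    have : Real.log D - 2 * Real.log (1 + a) ≤ -(2 * a * (1 - c)) / N := by
      rw [← hlogN, ← hDN]; exact hkey
    have h2 : -(2 * a * (1 - c)) / N = -(2 * (a * (1 - c) / N)) := by ring
    rw [h2] at this
    linarith
  have hm1 : (1 : ℝ) ≤ (m : ℝ) := by exact_mod_cast hm
  have hfin : a * (1 - c) / N ≥ ρ * θ * (1 - c) / (1 + ρ) ^ 2 := by
    have h1 : ρ * θ * (1 - c) = a * (1 - c) := by rw [ha]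
    rw [h1]
    exact div_le_div_of_nonneg_left (mul_nonneg ha0.le (by linarith)) hN0 (by nlinarith)
  have : (m : ℝ) * (Real.log (1 + a) - Real.log D / 2) ≥
      (m : ℝ) * (ρ * θ * (1 - c) / (1 + ρ) ^ 2) := by
    apply mul_le_mul_of_nonneg_left _ (by positivity)
    linarith
  calc (m : ℝ) * Real.log (1 + a) - (m : ℝ) * (Real.log D / 2)
      = (m : ℝ) * (Real.log (1 + a) - Real.log D / 2) := by ring
    _ ≥ (m : ℝ) * (ρ * θ * (1 - c) / (1 + ρ) ^ 2) := this
    _ = ((m : ℝ) * ρ / (1 + ρ) ^ 2) * θ * (1 - c) := by ring
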